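/- (Structure in deeper layers is detrimental.) In the setting of the ridgeless learning curve, in the regime α₀ > 1 and α_min = min{α₁,…,α_L} > 1, the limiting generalization error satisfies ε ≥ (Σ_{ℓ=1}^{L} 1/(α_ℓ−1)) κ₀ ψ(κ₀) − (κ₀²/μ₀) ψ'(κ₀) + ((1−μ₀)/μ₀ + Σ_{ℓ=1}^{L} 1/(α_ℓ−1)) η². That is, the generalization error for arbitrary weight covariances Σ̃₁,…,Σ̃_L is bounded below by the generalization error obtained with unstructured weights Σ̃_ℓ = I_{n_ℓ} for ℓ = 1,…,L. -/

import Mathlib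

open MeasureTheory


lemma key_mu_bounds (ν : Measure ℝ) [IsProbabilityMeasure ν]
    (hpos : ∀ᵐ σ ∂ν, 0 < σ) (κ a : ℝ) (hκ : 0 < κ) (ha : 1 < a)
    (hint : ∫ σ, σ / (κ + σ) ∂ν = 1 / a) :
    0 < 1 - a * ∫ σ, (σ / (κ + σ)) ^ 2 ∂ν ∧
      1 - a * ∫ σ, (σ / (κ + σ)) ^ 2 ∂ν ≤ 1 - 1 / a := by
  set f : ℝ → ℝ := fun σ => σ / (κ + σ) with hf
  have hmeas : Measurable f := measurable_id.div (measurable_const.add measurable_id)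
  have hae : ∀ᵐ σ ∂ν, 0 < f σ ∧ f σ < 1 := by
    filter_upwards [hpos] with σ hσ
    have hd : 0 < κ + σ := by linarith
    constructor
    · exact div_pos hσ hd
    · rw [div_lt_one hd]; linarith
  have hint_f : Integrable f ν := by
    refine (integrable_const (1 : ℝ)).mono' hmeas.aestronglyMeasurable ?_
    filter_upwards [hae] with σ ⟨h1, h2⟩
    rw [Real.norm_eq_abs, abs_of_pos h1]; linarith
  have hint_f2 : Integrable (fun σ => f σ ^ 2) ν := by
    refine (integrable_const (1 : ℝ)).mono' (hmeas.pow_const 2).aestronglyMeasurable ?_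
    filter_upwards [hae] with σ ⟨h1, h2⟩
    rw [Real.norm_eq_abs, abs_of_pos (pow_pos h1 2)]
    nlinarith
  have ha0 : 0 < a := by linarith
  -- upper bound on μ: ∫ f² ≥ (1/a)²
  have hsq : (1 / a) ^ 2 ≤ ∫ σ, f σ ^ 2 ∂ν := by
    have h0 : 0 ≤ ∫ σ, (f σ - 1 / a) ^ 2 ∂ν :=
      integral_nonneg fun σ => sq_nonneg _
    have hexp : ∫ σ, (f σ - 1 / a) ^ 2 ∂ν
        = (∫ σ, f σ ^ 2 ∂ν) - 2 * (1 / a) * (∫ σ, f σ ∂ν) + (1 / a) ^ 2 := by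
      have : ∀ σ, (f σ - 1 / a) ^ 2 = (f σ ^ 2 - 2 * (1 / a) * f σ) + (1 / a) ^ 2 := by
        intro σ; ring
      simp_rw [this]
      have hA : Integrable (fun σ => f σ ^ 2 - 2 * (1 / a) * f σ) ν :=
        hint_f2.sub (hint_f.const_mul _)
      have hB : Integrable (fun σ => 2 * (1 / a) * f σ) ν := hint_f.const_mul _
      rw [integral_add hA (integrable_const _), integral_sub hint_f2 hB,
        integral_const_mul, integral_const]
      simp
    rw [hexp, hint] at h0
    nlinarith
  -- strict lower bound: ∫ f² < ∫ f
  have hlt : ∫ σ, f σ ^ 2 ∂ν < 1 / a := by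
    rw [← hint, ← sub_pos, ← integral_sub hint_f hint_f2]
    set g : ℝ → ℝ := fun σ => f σ - f σ ^ 2 with hg
    have hgpos : ∀ᵐ σ ∂ν, 0 < g σ := by
      filter_upwards [hae] with σ ⟨h1, h2⟩
      have : g σ = f σ * (1 - f σ) := by simp [hg]; ring
      rw [this]; exact mul_pos h1 (by linarith)
    have hgint : Integrable g ν := hint_f.sub hint_f2
    rw [integral_pos_iff_support_of_nonneg_ae (hgpos.mono fun σ h => h.le) hgint]
    by_contra h
    push_neg at h
    have hz : ν (Function.support g) = 0 := le_antisymm h zero_le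
    have : ∀ᵐ σ ∂ν, g σ = 0 := by
      rw [ae_iff]
      simpa [Function.support] using hz
    obtain ⟨σ, h1, h2⟩ := (hgpos.and this).exists
    exact absurd h2 h1.ne'
  have heq : ∫ σ, (σ / (κ + σ)) ^ 2 ∂ν = ∫ σ, f σ ^ 2 ∂ν := rfl
  rw [heq]
  have h1 : a * (1 / a) = 1 := by field_simp
  have h2 : a * (1 / a) ^ 2 = 1 / a := by field_simp
  constructor
  · nlinarith [mul_lt_mul_of_pos_left hlt ha0]
  · nlinarith [mul_le_mul_of_nonneg_left hsq ha0.le]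

/-- Lemma 2, structure in deeper layers is detrimental.  In the regime
`α₀ > 1`, `αmin = min{α₁,…,α_L} > 1` of the ridgeless learning curve, the limiting
generalization error
`ε = (Σ_{ℓ=1}^L (1−μ_ℓ)/μ_ℓ) κ₀ψ(κ₀) − (κ₀²/μ₀)ψ'(κ₀) + (Σ_{ℓ=0}^L (1−μ_ℓ)/μ_ℓ) η²`
is bounded below by the generalization error obtained with unstructured weights
`Σ̃_ℓ = I` for `ℓ = 1,…,L`, namely
`(Σ_{ℓ=1}^L 1/(α_ℓ−1)) κ₀ψ(κ₀) − (κ₀²/μ₀)ψ'(κ₀) + ((1−μ₀)/μ₀ + Σ_{ℓ=1}^L 1/(α_ℓ−1)) η²`.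
Here `ν_ℓ` is the limiting spectral distribution of `Σ̃_ℓ`, `κ_ℓ > 0` solves
`E[σ̃_ℓ/(κ_ℓ+σ̃_ℓ)] = 1/α_ℓ`, `μ_ℓ = 1 − α_ℓ E[(σ̃_ℓ/(κ_ℓ+σ̃_ℓ))²]`, `ψ(κ₀) ≥ 0` and
`−ψ'(κ₀) ≥ 0`. -/
theorem weight_structure_detrimental
    (L : ℕ) (hL : 1 ≤ L) (α : ℕ → ℝ)
    -- overparameterized regime: α₀ > 1 and αmin > 1
    (hα : ∀ ℓ ≤ L, 1 < α ℓ)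
    -- limiting spectral distributions of the covariances Σ̃₀, Σ̃₁, …, Σ̃_L
    (ν : ℕ → Measure ℝ) (hprob : ∀ ℓ ≤ L, IsProbabilityMeasure (ν ℓ))
    (hpos : ∀ ℓ ≤ L, ∀ᵐ σ ∂ν ℓ, 0 < σ)
    -- self-consistent quantities
    (κ μ : ℕ → ℝ)
    (hκ : ∀ ℓ ≤ L, 0 < κ ℓ ∧ ∫ σ, σ / (κ ℓ + σ) ∂ν ℓ = 1 / α ℓ)
    (hμ : ∀ ℓ ≤ L, μ ℓ = 1 - α ℓ * ∫ σ, (σ / (κ ℓ + σ)) ^ 2 ∂ν ℓ)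
    -- ψ(κ₀) ≥ 0 and ψ'(κ₀) ≤ 0, and the noise level η ≥ 0
    (ψκ₀ dψ η : ℝ) (hψκ₀ : 0 ≤ ψκ₀) (hdψ : dψ ≤ 0) (hη : 0 ≤ η)
    -- the generalization error in this regime
    (ε : ℝ)
    (hε : ε = (∑ ℓ ∈ Finset.Icc 1 L, (1 - μ ℓ) / μ ℓ) * (κ 0 * ψκ₀)
        - κ 0 ^ 2 / μ 0 * dψ
        + (∑ ℓ ∈ Finset.range (L + 1), (1 - μ ℓ) / μ ℓ) * η ^ 2) :
    ε ≥ (∑ ℓ ∈ Finset.Icc 1 L, 1 / (α ℓ - 1)) * (κ 0 * ψκ₀)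
        - κ 0 ^ 2 / μ 0 * dψ
        + ((1 - μ 0) / μ 0 + ∑ ℓ ∈ Finset.Icc 1 L, 1 / (α ℓ - 1)) * η ^ 2 := by
  -- termwise inequality
  have hterm : ∀ ℓ ∈ Finset.Icc 1 L, 1 / (α ℓ - 1) ≤ (1 - μ ℓ) / μ ℓ := by
    intro ℓ hℓ
    have hℓL : ℓ ≤ L := (Finset.mem_Icc.mp hℓ).2
    have haℓ := hα ℓ hℓL
    haveI := hprob ℓ hℓL
    obtain ⟨hκpos, hκeq⟩ := hκ ℓ hℓL
    have hb := key_mu_bounds (ν ℓ) (hpos ℓ hℓL) (κ ℓ) (α ℓ) hκpos haℓ hκeq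
    rw [← hμ ℓ hℓL] at hb
    obtain ⟨hμpos, hμle⟩ := hb
    rw [div_le_div_iff₀ (by linarith) hμpos]
    have : α ℓ * μ ℓ ≤ α ℓ - 1 := by
      have := mul_le_mul_of_nonneg_left hμle (by linarith : (0:ℝ) ≤ α ℓ)
      have h1 : α ℓ * (1 - 1 / α ℓ) = α ℓ - 1 := by field_simp
      linarith
    nlinarith
  have hsum : ∑ ℓ ∈ Finset.Icc 1 L, 1 / (α ℓ - 1) ≤ ∑ ℓ ∈ Finset.Icc 1 L, (1 - μ ℓ) / μ ℓ :=
    Finset.sum_le_sum hterm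
  -- split the range sum
  have hrange : Finset.range (L + 1) = insert 0 (Finset.Icc 1 L) := by
    ext x; simp only [Finset.mem_range, Finset.mem_insert, Finset.mem_Icc]; omega
  have hsplit : ∑ ℓ ∈ Finset.range (L + 1), (1 - μ ℓ) / μ ℓ
      = (1 - μ 0) / μ 0 + ∑ ℓ ∈ Finset.Icc 1 L, (1 - μ ℓ) / μ ℓ := by
    rw [hrange, Finset.sum_insert (by simp)]
  have hκ0 : 0 < κ 0 := (hκ 0 (Nat.zero_le L)).1
  have hkψ : 0 ≤ κ 0 * ψκ₀ := mul_nonneg hκ0.le hψκ₀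
  have hη2 : 0 ≤ η ^ 2 := sq_nonneg η
  rw [hε, hsplit]
  nlinarith [mul_le_mul_of_nonneg_right hsum hkψ, mul_le_mul_of_nonneg_right hsum hη2]
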